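/- Let G be a simple graph with minimum degree at least 3, and let C be a cycle in G of length at least 4. If G contains no cycle of length 4 (as a subgraph), then the subgraph of G induced by the vertex set of C contains an induced cycle (hole) of length m for some integer m with 5 ≤ m ≤ length(C). -/

import Mathlib

open SimpleGraph

/-- `G` contains a cycle of length `n` as a subgraph. -/
def HasCycleLength {V : Type*} (G : SimpleGraph V) (n : ℕ) : Prop :=
  ∃ (v : V) (c : G.Walk v v), c.IsCycle ∧ c.length = n

/-- A hole: a cycle without chords (induced cycle). -/
def IsHole {V : Type*} (G : SimpleGraph V) {v : V} (c : G.Walk v v) : Prop :=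
  c.IsCycle ∧ ∀ a b : V, a ∈ c.support → b ∈ c.support → G.Adj a b → s(a, b) ∈ c.edges

private lemma start_mem_tail_support {V : Type*} {G : SimpleGraph V} {v : V}
    (p : G.Walk v v) (hp : ¬ p.Nil) : v ∈ p.support.tail := by
  rw [← SimpleGraph.Walk.support_tail_of_not_nil p hp]
  exact SimpleGraph.Walk.end_mem_support _

private lemma mem_support_closed_iff {V : Type*} {G : SimpleGraph V} {v x : V}
    (p : G.Walk v v) (hp : ¬ p.Nil) : x ∈ p.support ↔ x ∈ p.support.tail := by
  rw [SimpleGraph.Walk.support_eq_cons p, List.mem_cons]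
  constructor
  · rintro (rfl | h)
    · exact start_mem_tail_support p hp
    · exact h
  · exact Or.inr

private lemma mem_support_rotate_iff {V : Type*} [DecidableEq V] {G : SimpleGraph V} {v u x : V}
    (p : G.Walk v v) (hp : ¬ p.Nil) (hu : u ∈ p.support) (hr : ¬ (p.rotate u hu).Nil) :
    x ∈ (p.rotate u hu).support ↔ x ∈ p.support := by
  rw [mem_support_closed_iff _ hr, mem_support_closed_iff _ hp,
    (SimpleGraph.Walk.support_rotate p u hu).perm.mem_iff]

private lemma chord_split {V : Type*} [DecidableEq V] {G : SimpleGraph V} {a : V}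
    (d : G.Walk a a) (hd : d.IsCycle) {b : V} (hb : b ∈ d.support) (hba : a ≠ b)
    (hadj : G.Adj a b) (hne : s(a, b) ∉ d.edges) :
    ∃ (d₁ : G.Walk b b) (d₂ : G.Walk a a), d₁.IsCycle ∧ d₂.IsCycle ∧
      d₁.length + d₂.length = d.length + 2 ∧
      (∀ x ∈ d₁.support, x ∈ d.support) ∧ (∀ x ∈ d₂.support, x ∈ d.support) := by
  classical
  set p := d.takeUntil b hb with hp
  set q := d.dropUntil b hb with hq
  have hspec : p.append q = d := d.take_spec hb
  have htail : d.support.tail = p.support.tail ++ q.support.tail := by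
    rw [← hspec, SimpleGraph.Walk.tail_support_append]
  have hnodup : (p.support.tail ++ q.support.tail).Nodup := by
    rw [← htail]; exact hd.support_nodup
  rw [List.nodup_append] at hnodup
  obtain ⟨hp1, hq1, hdisj⟩ := hnodup
  have hbp : b ∈ p.support.tail := SimpleGraph.Walk.end_mem_tail_support_of_ne hba p
  have haq : a ∈ q.support.tail := SimpleGraph.Walk.end_mem_tail_support_of_ne hba.symm q
  have hppath : p.IsPath := by
    rw [SimpleGraph.Walk.isPath_def, SimpleGraph.Walk.support_eq_cons p, List.nodup_cons]
    exact ⟨fun h => hdisj _ h _ haq rfl, hp1⟩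
  have hqpath : q.IsPath := by
    rw [SimpleGraph.Walk.isPath_def, SimpleGraph.Walk.support_eq_cons q, List.nodup_cons]
    exact ⟨fun h => hdisj _ hbp _ h rfl, hq1⟩
  refine ⟨SimpleGraph.Walk.cons hadj.symm p, SimpleGraph.Walk.cons hadj q, ?_, ?_, ?_, ?_, ?_⟩
  · rw [SimpleGraph.Walk.cons_isCycle_iff]
    refine ⟨hppath, fun h => hne ?_⟩
    rw [Sym2.eq_swap] at h
    exact SimpleGraph.Walk.edges_takeUntil_subset d hb h
  · rw [SimpleGraph.Walk.cons_isCycle_iff]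
    exact ⟨hqpath, fun h => hne (SimpleGraph.Walk.edges_dropUntil_subset d hb h)⟩
  · have : p.length + q.length = d.length := by
      rw [← hspec, SimpleGraph.Walk.length_append]
    simp only [SimpleGraph.Walk.length_cons]
    omega
  · intro x hx
    rw [SimpleGraph.Walk.support_cons, List.mem_cons] at hx
    rcases hx with rfl | hx
    · exact hb
    · exact SimpleGraph.Walk.support_takeUntil_subset d hb hx
  · intro x hx
    rw [SimpleGraph.Walk.support_cons, List.mem_cons] at hx
    rcases hx with rfl | hx
    · exact SimpleGraph.Walk.start_mem_support d
    · exact SimpleGraph.Walk.support_dropUntil_subset d hb hx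

theorem stmt_0 {V : Type*} [Fintype V] (G : SimpleGraph V) [DecidableRel G.Adj]
    (hdeg : ∀ v : V, 3 ≤ G.degree v)
    (hC4 : ¬ HasCycleLength G 4)
    {v : V} (c : G.Walk v v) (hc : c.IsCycle) (hlen : 4 ≤ c.length) :
    ∃ (w : V) (d : G.Walk w w), IsHole G d ∧ 5 ≤ d.length ∧ d.length ≤ c.length ∧
      ∀ x : V, x ∈ d.support → x ∈ c.support := by
  classical
  have hc5 : 5 ≤ c.length := by
    rcases Nat.lt_or_ge c.length 5 with h | h
    · exfalso
      exact hC4 ⟨v, c, hc, by omega⟩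
    · exact h
  set S : Set ℕ := {n | 5 ≤ n ∧ ∃ (w : V) (d : G.Walk w w), d.IsCycle ∧ d.length = n ∧
      ∀ x ∈ d.support, x ∈ c.support} with hS
  have hcS : c.length ∈ S := ⟨hc5, v, c, hc, rfl, fun x hx => hx⟩
  obtain ⟨hn5, w, d, hdc, hdlen, hdsupp⟩ := Nat.sInf_mem ⟨_, hcS⟩
  have hmin : ∀ m ∈ S, sInf S ≤ m := fun m hm => Nat.sInf_le hm
  have hnc : sInf S ≤ c.length := Nat.sInf_le hcS
  refine ⟨w, d, ⟨hdc, ?_⟩, by omega, by omega, hdsupp⟩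
  intro a b hamem hbmem hadj
  by_contra hchord
  -- rotate d to start at a
  have hd' := hdc.rotate hamem
  set d' := d.rotate a hamem with hd'def
  have hdnil : ¬ d.Nil := hdc.not_nil
  have hd'nil : ¬ d'.Nil := hd'.not_nil
  have hb' : b ∈ d'.support := by
    rw [mem_support_rotate_iff d hdnil hamem hd'nil]; exact hbmem
  have hne' : s(a, b) ∉ d'.edges := by
    rw [(SimpleGraph.Walk.rotate_edges d a hamem).perm.mem_iff]; exact hchord
  obtain ⟨d₁, d₂, h1c, h2c, hsum, h1s, h2s⟩ := chord_split d' hd' hb' hadj.ne hadj hne'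
  have hlenrot : d'.length = d.length := by
    rw [← SimpleGraph.Walk.length_darts, ← SimpleGraph.Walk.length_darts,
      (SimpleGraph.Walk.rotate_darts d a hamem).perm.length_eq]
  have h1sub : ∀ x ∈ d₁.support, x ∈ c.support := fun x hx =>
    hdsupp x ((mem_support_rotate_iff d hdnil hamem hd'nil).mp (h1s x hx))
  have h2sub : ∀ x ∈ d₂.support, x ∈ c.support := fun x hx =>
    hdsupp x ((mem_support_rotate_iff d hdnil hamem hd'nil).mp (h2s x hx))
  have h13 : 3 ≤ d₁.length := h1c.three_le_length
  have h23 : 3 ≤ d₂.length := h2c.three_le_length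
  have h1ne4 : d₁.length ≠ 4 := fun h => hC4 ⟨_, d₁, h1c, h⟩
  have h2ne4 : d₂.length ≠ 4 := fun h => hC4 ⟨_, d₂, h2c, h⟩
  have h1notS : ¬ (5 ≤ d₁.length) := by
    intro h5
    have : d₁.length ∈ S := ⟨h5, _, d₁, h1c, rfl, h1sub⟩
    have := hmin _ this
    omega
  have h2notS : ¬ (5 ≤ d₂.length) := by
    intro h5
    have : d₂.length ∈ S := ⟨h5, _, d₂, h2c, rfl, h2sub⟩
    have := hmin _ this
    omega
  omega
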